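/- Let G be a graph factored into a connected non-bipartite graph H and a graph K with no isolated vertex (A = BC for adjacency matrices). Then G is connected. -/
import Mathlib


open SimpleGraph Matrix

private lemma pad_walk {V : Type*} {H : SimpleGraph V}
    (hnb : ∀ v, ∃ z, H.Adj v z) {x y : V} (p : H.Walk x y) (m : ℕ) :
    ∃ q : H.Walk x y, q.length = p.length + 2 * m := by
  induction m with
  | zero => exact ⟨p, by omega⟩
  | succ m ih =>
    obtain ⟨q, hq⟩ := ih
    obtain ⟨z, hz⟩ := hnb y
    refine ⟨q.append (Walk.cons hz (Walk.cons hz.symm Walk.nil)), ?_⟩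
    simp [Walk.length_append, hq]
    omega

private lemma all_adj {V : Type*} {H : SimpleGraph V} (hc : H.Preconnected)
    {x y : V} (e : H.Adj x y) (v : V) : ∃ z, H.Adj v z := by
  obtain ⟨p⟩ := hc v x
  cases p with
  | nil => exact ⟨y, e⟩
  | cons h _ => exact ⟨_, h⟩

private lemma exists_odd_closed {V : Type*} {H : SimpleGraph V}
    (hc : H.Connected) (hnb : ¬ H.Colorable 2) :
    ∃ (u : V) (w : H.Walk u u), Odd w.length := by
  by_contra hcon
  push_neg at hcon
  obtain ⟨r⟩ := hc.nonempty
  have hreach := hc.preconnected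
  have wk : ∀ v, H.Walk r v := fun v => Classical.choice (hreach r v)
  apply hnb
  have col : H.Coloring (ZMod 2) := by
    refine Coloring.mk (fun v => ((wk v).length : ZMod 2)) ?_
    intro u v hadj heq
    have hmod : (wk u).length % 2 = (wk v).length % 2 :=
      (ZMod.natCast_eq_natCast_iff _ _ _).mp heq
    have hodd : Odd ((wk u).reverse.append
        ((wk v).append (Walk.cons hadj.symm Walk.nil))).length := by
      simp only [Walk.length_append, Walk.length_reverse, Walk.length_cons,
        Walk.length_nil, Nat.odd_iff]
      omega
    exact hcon _ _ hodd
  simpa using col.colorable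

private lemma exists_uniform_length {n : ℕ} {H : SimpleGraph (Fin n)}
    (hc : H.Connected) (hnb : ¬ H.Colorable 2) :
    ∃ k, ∀ x y : Fin n, ∃ w : H.Walk x y, w.length = k := by
  obtain ⟨u, c, hcodd⟩ := exists_odd_closed hc hnb
  have hc1 : c.length % 2 = 1 := Nat.odd_iff.mp hcodd
  have hedge : ∃ x y, H.Adj x y := by
    cases c with
    | nil => simp at hc1
    | cons h _ => exact ⟨_, _, h⟩
  obtain ⟨x0, y0, e⟩ := hedge
  have hnbr : ∀ v, ∃ z, H.Adj v z := all_adj hc.preconnected e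
  have hall : ∀ pr : Fin n × Fin n, ∃ N, ∀ k, N ≤ k →
      ∃ w : H.Walk pr.1 pr.2, w.length = k := by
    rintro ⟨x, y⟩
    obtain ⟨p⟩ := hc.preconnected x u
    obtain ⟨q⟩ := hc.preconnected u y
    refine ⟨p.length + c.length + q.length, fun k hk => ?_⟩
    by_cases hpar : k % 2 = (p.length + q.length) % 2
    · obtain ⟨m, hm⟩ : ∃ m, k = (p.length + q.length) + 2 * m :=
        ⟨(k - (p.length + q.length)) / 2, by omega⟩
      obtain ⟨w, hw⟩ := pad_walk hnbr (p.append q) m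
      refine ⟨w, ?_⟩
      simp only [Walk.length_append] at hw
      omega
    · obtain ⟨m, hm⟩ : ∃ m, k = (p.length + (c.length + q.length)) + 2 * m :=
        ⟨(k - (p.length + (c.length + q.length))) / 2, by omega⟩
      obtain ⟨w, hw⟩ := pad_walk hnbr (p.append (c.append q)) m
      refine ⟨w, ?_⟩
      simp only [Walk.length_append] at hw
      omega
  choose f hf using hall
  exact ⟨Finset.univ.sup f, fun x y =>
    hf (x, y) _ (Finset.le_sup (Finset.mem_univ (x, y)))⟩

theorem stmt13 {n : ℕ} (G H K : SimpleGraph (Fin n))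
    [DecidableRel G.Adj] [DecidableRel H.Adj] [DecidableRel K.Adj]
    (hfac : G.adjMatrix ℝ = H.adjMatrix ℝ * K.adjMatrix ℝ)
    (hHconn : H.Connected) (hHnonbip : ¬ H.Colorable 2)
    (hK : ∀ v, 0 < K.degree v) :
    G.Connected := by
  obtain ⟨k, hk⟩ := exists_uniform_length hHconn hHnonbip
  have hKnbr : ∀ v, ∃ z, K.Adj v z := fun v =>
    (K.degree_pos_iff_exists_adj v).mp (hK v)
  -- commutation of the factors
  have h1 := congrArg Matrix.transpose hfac
  simp only [Matrix.transpose_mul, SimpleGraph.transpose_adjMatrix] at h1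
  have hcomm : Commute (H.adjMatrix ℝ) (K.adjMatrix ℝ) := hfac.symm.trans h1
  have hpow : G.adjMatrix ℝ ^ k = H.adjMatrix ℝ ^ k * K.adjMatrix ℝ ^ k := by
    rw [hfac, hcomm.mul_pow]
  have hBpos : ∀ i j, 0 < (H.adjMatrix ℝ ^ k) i j := by
    intro i j
    rw [adjMatrix_pow_apply_eq_card_walk]
    have : 0 < Fintype.card {p : H.Walk i j // p.length = k} :=
      Fintype.card_pos_iff.mpr ⟨⟨(hk i j).choose, (hk i j).choose_spec⟩⟩
    exact_mod_cast this
  have hCnonneg : ∀ i j, 0 ≤ (K.adjMatrix ℝ ^ k) i j := by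
    intro i j
    rw [adjMatrix_pow_apply_eq_card_walk]
    exact_mod_cast Nat.zero_le _
  have hKwalk : ∀ j : Fin n, ∃ m, ∃ w : K.Walk j m, w.length = k := by
    intro j
    obtain ⟨z, hz⟩ := hKnbr j
    rcases Nat.even_or_odd k with ⟨t, ht⟩ | ⟨t, ht⟩
    · obtain ⟨w, hw⟩ := pad_walk hKnbr (Walk.nil : K.Walk j j) t
      exact ⟨j, w, by simp at hw; omega⟩
    · obtain ⟨w, hw⟩ := pad_walk hKnbr (Walk.cons hz Walk.nil) t
      exact ⟨z, w, by simp at hw; omega⟩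
  have hCcol : ∀ j, ∃ m, 0 < (K.adjMatrix ℝ ^ k) m j := by
    intro j
    obtain ⟨m, w, hw⟩ := hKwalk j
    refine ⟨m, ?_⟩
    rw [adjMatrix_pow_apply_eq_card_walk]
    have : 0 < Fintype.card {p : K.Walk m j // p.length = k} :=
      Fintype.card_pos_iff.mpr ⟨⟨w.reverse, by simp [hw]⟩⟩
    exact_mod_cast this
  have hApos : ∀ i j, 0 < (G.adjMatrix ℝ ^ k) i j := by
    intro i j
    rw [hpow, Matrix.mul_apply]
    obtain ⟨m, hm⟩ := hCcol j
    exact Finset.sum_pos'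
      (fun t _ => mul_nonneg (le_of_lt (hBpos i t)) (hCnonneg t j))
      ⟨m, Finset.mem_univ m, mul_pos (hBpos i m) hm⟩
  haveI : Nonempty (Fin n) := hHconn.nonempty
  refine ⟨fun i j => ?_⟩
  have h := hApos i j
  rw [adjMatrix_pow_apply_eq_card_walk] at h
  have hcard : 0 < Fintype.card {p : G.Walk i j // p.length = k} := by
    exact_mod_cast h
  obtain ⟨⟨w, _⟩⟩ := Fintype.card_pos_iff.mp hcard
  exact w.reachable
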